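/- Let Δ and N be independent random variables where Δ has distribution P(Δ = j) = (1−p₀)·p₀^{j−1} for j ≥ 1 and N takes values in {1,…,Λ} with P(N = l) = p_l/(1−p₀). Suppose ρ ∈ (0,1), α ≥ 1, and p₀·α < 1. Then E[ρ^{min(N,Δ)}·α^{max(Δ−N,0)}] = ∑_{l=1}^{Λ} p_l·Ω_l, where Ω_l := ρ·(1−(p₀ρ)^l)/(1−p₀ρ) + α·(p₀ρ)^l/(1−p₀α). Consequently, for any random variable X⁺ and any χ ∈ ℝⁿ with V(X⁺) ≤ ρ^{min(N,Δ)}·α^{max(Δ−N,0)}·V(χ) almost surely, E[V(X⁺)] ≤ (∑_{l=1}^{Λ} p_l·Ω_l)·V(χ). -/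

import Mathlib

open MeasureTheory ProbabilityTheory

lemma stmt5_aux_summable (p₀ ρ α : ℝ) (hp₀0 : 0 ≤ p₀) (hρ0 : 0 < ρ) (hρ1 : ρ < 1)
    (hα : 1 ≤ α) (hpα : p₀ * α < 1) (l : ℕ) :
    Summable (fun k : ℕ => ρ ^ min l (k+1) * α ^ (k+1 - l) * p₀ ^ k) := by
  apply Summable.of_nonneg_of_le (fun k => by positivity) (fun k => ?_)
    ((summable_geometric_of_lt_one (by positivity) hpα).mul_left α)
  have h1 : ρ ^ min l (k+1) ≤ 1 := pow_le_one₀ hρ0.le hρ1.le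
  have h2 : α ^ (k+1-l) ≤ α ^ (k+1) := pow_le_pow_right₀ hα (by omega)
  have h3 : (0:ℝ) ≤ α ^ (k+1-l) := by positivity
  calc ρ ^ min l (k+1) * α ^ (k+1-l) * p₀ ^ k
      ≤ 1 * α ^ (k+1) * p₀ ^ k := by
        apply mul_le_mul_of_nonneg_right _ (by positivity)
        exact mul_le_mul h1 h2 h3 zero_le_one
    _ = α * (p₀ * α) ^ k := by rw [mul_pow]; ring

lemma stmt5_aux_tsum (p₀ ρ α : ℝ) (hp₀0 : 0 ≤ p₀) (hρ0 : 0 < ρ) (hρ1 : ρ < 1)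
    (hα : 1 ≤ α) (hpα : p₀ * α < 1) (l : ℕ) :
    ∑' k : ℕ, ρ ^ min l (k+1) * α ^ (k+1 - l) * p₀ ^ k
      = ρ * (1 - (p₀*ρ)^l) / (1 - p₀*ρ) + α * (p₀*ρ)^l / (1 - p₀*α) := by
  have hx : p₀ * ρ < 1 :=
    lt_of_le_of_lt (mul_le_mul_of_nonneg_left (hρ1.le.trans hα) hp₀0) hpα
  have hx1 : p₀ * ρ ≠ 1 := ne_of_lt hx
  have hsum := stmt5_aux_summable p₀ ρ α hp₀0 hρ0 hρ1 hα hpα l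
  have key := hsum.sum_add_tsum_nat_add l
  rw [← key]
  have hrange : ∑ i ∈ Finset.range l, ρ ^ min l (i+1) * α ^ (i+1 - l) * p₀ ^ i
      = ρ * (1 - (p₀*ρ)^l) / (1 - p₀*ρ) := by
    have : ∀ i ∈ Finset.range l, ρ ^ min l (i+1) * α ^ (i+1 - l) * p₀ ^ i = ρ * (p₀*ρ)^i := by
      intro i hi
      have hi' : i < l := Finset.mem_range.mp hi
      have hmin : min l (i+1) = i+1 := by omega
      have hsub : i + 1 - l = 0 := by omega
      rw [hmin, hsub, pow_zero, mul_pow, pow_succ]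
      ring
    rw [Finset.sum_congr rfl this, ← Finset.mul_sum, geom_sum_eq hx1]
    rw [show ((p₀*ρ)^l - 1) / (p₀*ρ - 1) = (1 - (p₀*ρ)^l) / (1 - p₀*ρ) by
      rw [← neg_sub ((p₀*ρ)^l) 1, ← neg_sub (p₀*ρ) 1, neg_div_neg_eq]]
    ring
  have htail : ∑' k : ℕ, ρ ^ min l (k+l+1) * α ^ (k+l+1 - l) * p₀ ^ (k+l)
      = α * (p₀*ρ)^l / (1 - p₀*α) := by
    have : ∀ k : ℕ, ρ ^ min l (k+l+1) * α ^ (k+l+1 - l) * p₀ ^ (k+l)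
        = (ρ^l * p₀^l * α) * (p₀*α)^k := by
      intro k
      have hmin : min l (k+l+1) = l := by omega
      have hsub : k + l + 1 - l = k + 1 := by omega
      rw [hmin, hsub, pow_add, pow_succ, mul_pow]
      ring
    rw [tsum_congr this, tsum_mul_left, tsum_geometric_of_lt_one (by positivity) hpα]
    rw [mul_pow]
    ring
  rw [hrange, ← htail]

/-- Inter-arrival Lyapunov bound for Algorithm A₁ (Lemma 2).
With `Δ` geometric, `N` on `{1,…,Λ}` with `P(N=l)=p_l/(1−p₀)`, independent, `ρ ∈ (0,1)`,
`α ≥ 1`, `p₀α < 1`: `E[ρ^{min(N,Δ)} α^{max(Δ−N,0)}] = ∑_{l=1}^{Λ} p_l Ω_l` with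
`Ω_l = ρ(1−(p₀ρ)^l)/(1−p₀ρ) + α(p₀ρ)^l/(1−p₀α)`; consequently, if
`V(X⁺) ≤ ρ^{min(N,Δ)} α^{max(Δ−N,0)} V(χ)` a.s., then
`E[V(X⁺)] ≤ (∑_{l=1}^{Λ} p_l Ω_l) V(χ)`. -/
theorem stmt_5
    {n : ℕ} {Ω : Type*} [MeasurableSpace Ω] (μ : Measure Ω) [IsProbabilityMeasure μ]
    (p₀ ρ α : ℝ) (Λ : ℕ) (p : ℕ → ℝ)
    (hp₀0 : 0 ≤ p₀) (hp₀1 : p₀ < 1) (hρ0 : 0 < ρ) (hρ1 : ρ < 1)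
    (hα : 1 ≤ α) (hpα : p₀ * α < 1)
    (hp : ∀ l ∈ Finset.Icc 1 Λ, 0 ≤ p l)
    (hpsum : p₀ + ∑ l ∈ Finset.Icc 1 Λ, p l = 1)
    (Δ N : Ω → ℕ) (hΔmeas : Measurable Δ) (hNmeas : Measurable N)
    (hindep : IndepFun Δ N μ)
    (hΔdist : ∀ j : ℕ, 1 ≤ j → μ {ω | Δ ω = j} = ENNReal.ofReal ((1 - p₀) * p₀ ^ (j - 1)))
    (hNval : ∀ ω, 1 ≤ N ω ∧ N ω ≤ Λ)
    (hNdist : ∀ l ∈ Finset.Icc 1 Λ, μ {ω | N ω = l} = ENNReal.ofReal (p l / (1 - p₀)))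
    (V : EuclideanSpace ℝ (Fin n) → ℝ) (hV : ∀ x, 0 ≤ V x) :
    (∫⁻ ω, ENNReal.ofReal (ρ ^ min (N ω) (Δ ω) * α ^ (Δ ω - N ω)) ∂μ
        = ENNReal.ofReal (∑ l ∈ Finset.Icc 1 Λ, p l *
            (ρ * (1 - (p₀ * ρ) ^ l) / (1 - p₀ * ρ) + α * (p₀ * ρ) ^ l / (1 - p₀ * α)))) ∧
    (∀ (Xplus : Ω → EuclideanSpace ℝ (Fin n)) (χ : EuclideanSpace ℝ (Fin n)),
      (∀ᵐ ω ∂μ, V (Xplus ω) ≤ ρ ^ min (N ω) (Δ ω) * α ^ (Δ ω - N ω) * V χ) →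
      ∫⁻ ω, ENNReal.ofReal (V (Xplus ω)) ∂μ
        ≤ ENNReal.ofReal ((∑ l ∈ Finset.Icc 1 Λ, p l *
            (ρ * (1 - (p₀ * ρ) ^ l) / (1 - p₀ * ρ) + α * (p₀ * ρ) ^ l / (1 - p₀ * α))) * V χ)) := by
  have hx : p₀ * ρ < 1 :=
    lt_of_le_of_lt (mul_le_mul_of_nonneg_left (hρ1.le.trans hα) hp₀0) hpα
  have h1p₀ : (0:ℝ) < 1 - p₀ := by linarith
  set Ωl : ℕ → ℝ := fun l =>
    ρ * (1 - (p₀ * ρ) ^ l) / (1 - p₀ * ρ) + α * (p₀ * ρ) ^ l / (1 - p₀ * α) with hΩldef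
  have hΩnonneg : ∀ l, 0 ≤ Ωl l := by
    intro l
    have h1 : (p₀*ρ)^l ≤ 1 := pow_le_one₀ (by positivity) hx.le
    have h2 : (0:ℝ) < 1 - p₀*ρ := by linarith
    have h3 : (0:ℝ) < 1 - p₀*α := by linarith
    have h4 : (0:ℝ) ≤ (p₀*ρ)^l := by positivity
    have t1 : (0:ℝ) ≤ ρ * (1 - (p₀*ρ)^l) / (1 - p₀*ρ) :=
      div_nonneg (by nlinarith) h2.le
    have t2 : (0:ℝ) ≤ α * (p₀*ρ)^l / (1 - p₀*α) :=
      div_nonneg (by nlinarith) h3.le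
    exact add_nonneg t1 t2
  have hSnonneg : 0 ≤ ∑ l ∈ Finset.Icc 1 Λ, p l * Ωl l :=
    Finset.sum_nonneg fun l hl => mul_nonneg (hp l hl) (hΩnonneg l)
  -- μ{Δ = 0} = 0
  have hΔ0 : μ {ω | Δ ω = 0} = 0 := by
    have hdisj : Pairwise (Function.onFun Disjoint fun j : ℕ => {ω | Δ ω = j}) := by
      intro i j hij
      simp only [Function.onFun, Set.disjoint_left]
      intro ω h1 h2
      exact hij (by simp only [Set.mem_setOf_eq] at h1 h2; omega)
    have hmeas : ∀ j : ℕ, MeasurableSet {ω | Δ ω = j} :=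
      fun j => hΔmeas (measurableSet_singleton j)
    have huniv : (⋃ j : ℕ, {ω | Δ ω = j}) = Set.univ := by ext ω; simp
    have h1 : ∑' j : ℕ, μ {ω | Δ ω = j} = 1 := by
      rw [← measure_iUnion hdisj hmeas, huniv, measure_univ]
    have h2 : ∑' j : ℕ, μ {ω | Δ ω = j + 1} = 1 := by
      have hc : ∀ j : ℕ, μ {ω | Δ ω = j + 1} = ENNReal.ofReal ((1 - p₀) * p₀ ^ j) := by
        intro j; rw [hΔdist (j+1) (by omega)]; norm_num
      rw [tsum_congr hc, ← ENNReal.ofReal_tsum_of_nonneg (fun j => by positivity)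
        ((summable_geometric_of_lt_one hp₀0 hp₀1).mul_left _)]
      rw [tsum_mul_left, tsum_geometric_of_lt_one hp₀0 hp₀1]
      rw [show (1-p₀) * (1-p₀)⁻¹ = 1 by field_simp]
      exact ENNReal.ofReal_one
    rw [tsum_eq_zero_add' ENNReal.summable, h2] at h1
    have h3 : μ {ω | Δ ω = 0} + 1 = 0 + 1 := by simpa using h1
    exact WithTop.add_right_cancel ENNReal.one_ne_top h3
  -- main computation
  have hT : Measurable (fun ω => (N ω, Δ ω)) := hNmeas.prodMk hΔmeas
  set F : ℕ × ℕ → ENNReal :=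
    fun q => ENNReal.ofReal (ρ ^ min q.1 q.2 * α ^ (q.2 - q.1)) with hFdef
  have hmain : ∫⁻ ω, ENNReal.ofReal (ρ ^ min (N ω) (Δ ω) * α ^ (Δ ω - N ω)) ∂μ
      = ENNReal.ofReal (∑ l ∈ Finset.Icc 1 Λ, p l * Ωl l) := by
    have step1 : ∫⁻ ω, ENNReal.ofReal (ρ ^ min (N ω) (Δ ω) * α ^ (Δ ω - N ω)) ∂μ
        = ∑' q : ℕ × ℕ, F q * μ ((fun ω => (N ω, Δ ω)) ⁻¹' {q}) := by
      rw [← lintegral_map (measurable_of_countable F) hT, lintegral_countable']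
      exact tsum_congr fun q => by rw [Measure.map_apply hT (measurableSet_singleton q)]
    rw [step1]
    have hfac : ∀ q : ℕ × ℕ, μ ((fun ω => (N ω, Δ ω)) ⁻¹' {q})
        = μ {ω | Δ ω = q.2} * μ {ω | N ω = q.1} := by
      intro q
      have hpre : ((fun ω => (N ω, Δ ω)) ⁻¹' {q}) = Δ ⁻¹' {q.2} ∩ N ⁻¹' {q.1} := by
        ext ω; simp [Prod.ext_iff, and_comm]
      rw [hpre, hindep.measure_inter_preimage_eq_mul _ _
        (measurableSet_singleton _) (measurableSet_singleton _)]
      rfl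
    rw [tsum_congr (fun q => by rw [hfac q])]
    have hprod : ∑' q : ℕ × ℕ, F q * (μ {ω | Δ ω = q.2} * μ {ω | N ω = q.1})
        = ∑' (l : ℕ) (j : ℕ), F (l, j) * (μ {ω | Δ ω = j} * μ {ω | N ω = l}) :=
      ENNReal.tsum_prod (f := fun l j => F (l, j) * (μ {ω | Δ ω = j} * μ {ω | N ω = l}))
    rw [hprod]
    have houter : ∀ l ∉ Finset.Icc 1 Λ,
        ∑' j : ℕ, F (l, j) * (μ {ω | Δ ω = j} * μ {ω | N ω = l}) = 0 := by
      intro l hl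
      have hNempty : {ω | N ω = l} = ∅ := by
        ext ω
        simp only [Set.mem_setOf_eq, Set.mem_empty_iff_false, iff_false]
        intro h
        have := hNval ω
        simp only [Finset.mem_Icc, not_and_or, not_le] at hl
        omega
      simp [hNempty]
    rw [tsum_eq_sum houter,
      ENNReal.ofReal_sum_of_nonneg (fun l hl => mul_nonneg (hp l hl) (hΩnonneg l))]
    apply Finset.sum_congr rfl
    intro l hl
    have hl1 : 1 ≤ l := (Finset.mem_Icc.mp hl).1
    have hNl : μ {ω | N ω = l} = ENNReal.ofReal (p l / (1 - p₀)) := hNdist l hl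
    have hcl : (0:ℝ) ≤ (1 - p₀) * (p l / (1 - p₀)) :=
      mul_nonneg h1p₀.le (div_nonneg (hp l hl) h1p₀.le)
    have hzero : F (l, 0) * (μ {ω | Δ ω = 0} * μ {ω | N ω = l}) = 0 := by
      rw [hΔ0]; simp
    have hsupp : Function.support
        (fun j : ℕ => F (l, j) * (μ {ω | Δ ω = j} * μ {ω | N ω = l}))
          ⊆ Set.range Nat.succ := by
      intro j hj
      rcases j with _ | j
      · exact absurd hzero hj
      · exact ⟨j, rfl⟩
    rw [← Function.Injective.tsum_eq Nat.succ_injective hsupp]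
    have hterm : ∀ j : ℕ, F (l, Nat.succ j) * (μ {ω | Δ ω = Nat.succ j} * μ {ω | N ω = l})
        = ENNReal.ofReal ((ρ ^ min l (j+1) * α ^ (j+1-l) * p₀ ^ j)
            * ((1-p₀) * (p l / (1-p₀)))) := by
      intro j
      have hd : μ {ω | Δ ω = Nat.succ j} = ENNReal.ofReal ((1-p₀) * p₀ ^ j) := by
        rw [show Nat.succ j = j + 1 from rfl, hΔdist (j+1) (by omega)]; norm_num
      rw [hd, hNl, ← ENNReal.ofReal_mul (by positivity), ← ENNReal.ofReal_mul (by positivity)]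
      congr 1
      show ρ ^ min l (Nat.succ j) * α ^ (Nat.succ j - l) * ((1-p₀) * p₀ ^ j * (p l / (1-p₀)))
        = ρ ^ min l (j+1) * α ^ (j+1-l) * p₀ ^ j * ((1-p₀) * (p l / (1-p₀)))
      ring
    rw [tsum_congr hterm, ← ENNReal.ofReal_tsum_of_nonneg
      (fun j => mul_nonneg (by positivity) hcl)
      ((stmt5_aux_summable p₀ ρ α hp₀0 hρ0 hρ1 hα hpα l).mul_right _)]
    congr 1
    rw [tsum_mul_right, stmt5_aux_tsum p₀ ρ α hp₀0 hρ0 hρ1 hα hpα l]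
    have hcp : (1-p₀) * (p l / (1-p₀)) = p l := by field_simp
    rw [hcp]
    ring
  refine ⟨hmain, ?_⟩
  intro Xplus χ hbound
  have hGmeas : Measurable (fun ω =>
      ENNReal.ofReal (ρ ^ min (N ω) (Δ ω) * α ^ (Δ ω - N ω))) :=
    (measurable_of_countable F).comp hT
  calc ∫⁻ ω, ENNReal.ofReal (V (Xplus ω)) ∂μ
      ≤ ∫⁻ ω, ENNReal.ofReal (ρ ^ min (N ω) (Δ ω) * α ^ (Δ ω - N ω) * V χ) ∂μ := by
        apply lintegral_mono_ae
        filter_upwards [hbound] with ω h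
        exact ENNReal.ofReal_le_ofReal h
    _ = ∫⁻ ω, ENNReal.ofReal (ρ ^ min (N ω) (Δ ω) * α ^ (Δ ω - N ω))
          * ENNReal.ofReal (V χ) ∂μ := by
        apply lintegral_congr
        intro ω
        exact ENNReal.ofReal_mul (by positivity)
    _ = (∫⁻ ω, ENNReal.ofReal (ρ ^ min (N ω) (Δ ω) * α ^ (Δ ω - N ω)) ∂μ)
          * ENNReal.ofReal (V χ) := lintegral_mul_const _ hGmeas
    _ = ENNReal.ofReal (∑ l ∈ Finset.Icc 1 Λ, p l * Ωl l) * ENNReal.ofReal (V χ) := by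
        rw [hmain]
    _ = ENNReal.ofReal ((∑ l ∈ Finset.Icc 1 Λ, p l * Ωl l) * V χ) :=
        (ENNReal.ofReal_mul hSnonneg).symm
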